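/- arXiv:2110.06026 — 2 statements merged into one kernel-verified Lean document; each statement's English description precedes it below -/
import Mathlib

section
/- If X is an ω^3-large finite set of natural numbers, then |X| > exp^{min X}(min X), where exp(x) = 2^x and exp^{n+1}(x) = exp(exp^n(x)). -/
open Finset

/-- Minimum of a finite set of naturals (0 for the empty set). -/
def fmin (X : Finset ℕ) : ℕ := WithTop.untopD 0 X.min

/-- Maximum of a finite set of naturals (0 for the empty set). -/
def fmax (X : Finset ℕ) : ℕ := WithBot.unbotD 0 X.max

/-- `OmegaLarge d X` : `X` is ω^d-large (for `d ≥ 1`; `OmegaLarge 0` means nonempty).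
`X` is ω^{d+1}-large iff `X = {min X} ∪ ⋃_{m < min X} X_m` where the `X_m` form a
stack (each max below the next min) of ω^d-large sets all above `min X`. -/
def OmegaLarge : ℕ → Finset ℕ → Prop
  | 0, X => X.Nonempty
  | d+1, X => X.Nonempty ∧ ∃ f : ℕ → Finset ℕ,
      (∀ m < fmin X, OmegaLarge d (f m)) ∧
      (∀ m, m + 1 < fmin X → fmax (f m) < fmin (f (m+1))) ∧
      (∀ m < fmin X, fmin X < fmin (f m)) ∧
      X = insert (fmin X) ((Finset.range (fmin X)).biUnion f)

/-- `OmegaMulLarge d n X` : `X` is ω^d·n-large, i.e. a union of a stack of `n`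
ω^d-large sets. -/
def OmegaMulLarge (d n : ℕ) (X : Finset ℕ) : Prop :=
  ∃ f : ℕ → Finset ℕ,
    (∀ m < n, OmegaLarge d (f m)) ∧
    (∀ m, m + 1 < n → fmax (f m) < fmin (f (m+1))) ∧
    X = (Finset.range n).biUnion f

/-- A (finite) binary tree: a set of binary strings closed under initial segments. -/
def IsTree (T : Finset (List Bool)) : Prop :=
  ∀ σ ∈ T, ∀ τ : List Bool, τ <+: σ → τ ∈ T

/-- `level T x` is `T ∩ 2^x`, the set of strings in `T` of length `x`. -/
def level (T : Finset (List Bool)) (x : ℕ) : Finset (List Bool) :=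
  T.filter (fun σ => σ.length = x)

/-- Two strings are compatible if one is an initial segment of the other. -/
def Compat (σ τ : List Bool) : Prop := σ <+: τ ∨ τ <+: σ

instance (σ τ : List Bool) : Decidable (Compat σ τ) := by
  unfold Compat; infer_instance

/-- `T_ρ` : the elements of `T` compatible with `ρ`. -/
def Tsub (T : Finset (List Bool)) (ρ : List Bool) : Finset (List Bool) :=
  T.filter (fun σ => Compat σ ρ)

/-- `x` and `z` are consecutive elements of `X`. -/
def Consec (X : Finset ℕ) (x z : ℕ) : Prop :=
  x ∈ X ∧ z ∈ X ∧ x < z ∧ ∀ y ∈ X, y ≤ x ∨ z ≤ y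

/-- `T` is `X`-quasistrong: `T` is a tree meeting every level in `X`, and every
node at a level of `X` has exactly two (necessarily incompatible) extensions at
the next level of `X`. -/
def QuasiStrong (X : Finset ℕ) (T : Finset (List Bool)) : Prop :=
  IsTree T ∧ (∀ x ∈ X, (level T x).Nonempty) ∧
  ∀ x z, Consec X x z → ∀ σ ∈ level T x,
    ((level T z).filter (fun τ => σ <+: τ)).card = 2

/-- `σ` is a leaf (maximal element) of `S`. -/
def IsLeaf (S : Finset (List Bool)) (σ : List Bool) : Prop :=
  σ ∈ S ∧ ∀ τ ∈ S, σ <+: τ → τ = σ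

/-- `S` is `(C,Y)`-prehomogeneous for color `c`. -/
def PrehomFor (C : List Bool → ℕ) (Y : Finset ℕ) (S : Finset (List Bool)) (c : ℕ) : Prop :=
  ∀ x z, Consec Y x z → ∀ σ ∈ level S x, ∀ τ ∈ level S z, σ <+: τ →
    ∃ ζ ∈ S, σ <+: ζ ∧ ζ <+: τ ∧ C ζ = c

/-- `S` is `(C,Y)`-prehomogeneous (for some color). -/
def Prehom (C : List Bool → ℕ) (Y : Finset ℕ) (S : Finset (List Bool)) : Prop :=
  ∃ c, PrehomFor C Y S c

/-- The main clause of persistence: for every `X`-quasistrong tree `T` and every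
`k`-coloring `C` of the leaves `T ∩ 2^{max X}`, there are a color `c < k` and a
`Y`-quasistrong subtree `S ⊆ T` each of whose leaves has an extension in `C⁻¹(c)`. -/
def PersClause (k : ℕ) (X Y : Finset ℕ) : Prop :=
  ∀ T : Finset (List Bool), QuasiStrong X T →
    ∀ C : List Bool → ℕ, (∀ σ ∈ level T (fmax X), C σ < k) →
      ∃ c < k, ∃ S ⊆ T, QuasiStrong Y S ∧
        ∀ σ, IsLeaf S σ → ∃ τ ∈ level T (fmax X), σ <+: τ ∧ C τ = c

/-- `Persistent d n k i X` : `X` is `(ω^d·n, k, i)`-persistent. -/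
def Persistent (d n k : ℕ) : ℕ → Finset ℕ → Prop
  | 0, X => OmegaMulLarge d n X
  | i+1, X => ∃ Y, Y ⊆ X ∧ Persistent d n k i Y ∧ PersClause k X Y

/-- `SuperPersistent d n k i X` : `X` is `(ω^d·n, k, i)`-superpersistent. -/
def SuperPersistent (d n k i : ℕ) (X : Finset ℕ) : Prop :=
  ∀ T : List Bool → Finset (List Bool),
    (∀ ρ : List Bool, ρ.length = fmin X →
      QuasiStrong X (T ρ) ∧ ∀ σ ∈ T ρ, Compat σ ρ) →
    ∀ C : List Bool → ℕ, (∀ σ, C σ < k) →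
      ∃ Y ⊆ X, Persistent d n k i Y ∧
        ∀ ρ : List Bool, ρ.length = fmin X →
          ∃ S ⊆ T ρ, QuasiStrong Y S ∧ Prehom C Y S

/-- `eOf δ` : the least integer `e` with `2^{-e} < δ`. -/
noncomputable def eOf (δ : ℚ) : ℕ := sInf {e : ℕ | (2:ℚ) ^ (-(e:ℤ)) < δ}

/-- The Kučera–Gács coding bound `g(m,δ) = (m-1)e + m(m-1)/2`. -/
noncomputable def gKG (m : ℕ) (δ : ℚ) : ℕ := (m-1) * eOf δ + m*(m-1)/2

/-- `ḡ(x,k,i)`: iterated Kučera–Gács bound. -/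
noncomputable def gbar (x k : ℕ) : ℕ → ℕ
  | 0 => x + k + 1
  | i+1 => gKG (gbar x k i) (1/(k:ℚ))

/-- `h(ℓ,m,δ) = 2^{eℓ·2^{5m}}` where `e` is least with `2^{-e} < δ`. -/
noncomputable def hFun (l m : ℕ) (δ : ℚ) : ℕ := 2 ^ (eOf δ * l * 2 ^ (5*m))

/-- `h̄(x,n,k) = h(2^x, n, 1/k)·k^{2^x}`. -/
noncomputable def hbar (x n k : ℕ) : ℕ := hFun (2^x) n (1/(k:ℚ)) * k^(2^x)

/-- `expIter n x = exp^n(x)` where `exp(x) = 2^x`. -/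
def expIter : ℕ → ℕ → ℕ
  | 0, x => x
  | n+1, x => 2 ^ (expIter n x)


lemma fmin_eq (X : Finset ℕ) (h : X.Nonempty) : fmin X = X.min' h := by
  rw [fmin, ← Finset.coe_min' h, WithTop.untopD_coe]

lemma fmax_eq (X : Finset ℕ) (h : X.Nonempty) : fmax X = X.max' h := by
  rw [fmax, ← Finset.coe_max' h, WithBot.unbotD_coe]

lemma fmin_le {X : Finset ℕ} {x : ℕ} (hx : x ∈ X) : fmin X ≤ x := by
  rw [fmin_eq X ⟨x, hx⟩]; exact Finset.min'_le _ _ hx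

lemma le_fmax {X : Finset ℕ} {x : ℕ} (hx : x ∈ X) : x ≤ fmax X := by
  rw [fmax_eq X ⟨x, hx⟩]; exact Finset.le_max' _ _ hx

lemma fmin_mem (X : Finset ℕ) (h : X.Nonempty) : fmin X ∈ X := by
  rw [fmin_eq X h]; exact X.min'_mem h

lemma fmax_mem (X : Finset ℕ) (h : X.Nonempty) : fmax X ∈ X := by
  rw [fmax_eq X h]; exact X.max'_mem h

lemma fmin_le_fmax (X : Finset ℕ) (h : X.Nonempty) : fmin X ≤ fmax X :=
  le_trans (fmin_le (fmax_mem X h)) le_rfl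

lemma card_add_fmin_le (Z : Finset ℕ) (h : Z.Nonempty) : Z.card + fmin Z ≤ fmax Z + 1 := by
  have hsub : Z ⊆ Finset.Icc (fmin Z) (fmax Z) := fun x hx =>
    Finset.mem_Icc.mpr ⟨fmin_le hx, le_fmax hx⟩
  have h1 := Finset.card_le_card hsub
  rw [Nat.card_Icc] at h1
  have h2 := fmin_le_fmax Z h
  omega

lemma stack_lt (g : ℕ → Finset ℕ) (n : ℕ)
    (hne : ∀ m < n, (g m).Nonempty)
    (hst : ∀ m, m + 1 < n → fmax (g m) < fmin (g (m+1))) :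
    ∀ m m', m < m' → m' < n → fmax (g m) < fmin (g m') := by
  intro m m' hmm hm'
  induction m' with
  | zero => omega
  | succ k ih =>
    rcases Nat.lt_succ_iff_lt_or_eq.mp hmm with h | h
    · have h1 := ih h (by omega)
      have h2 := hst k hm'
      have h3 := fmin_le_fmax (g k) (hne k (by omega))
      omega
    · subst h; exact hst m hm'

lemma stack_disj (g : ℕ → Finset ℕ) (n : ℕ)
    (hne : ∀ m < n, (g m).Nonempty)
    (hst : ∀ m, m + 1 < n → fmax (g m) < fmin (g (m+1))) :
    ∀ m m', m < m' → m' < n → Disjoint (g m) (g m') := by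
  intro m m' h1 h2
  rw [Finset.disjoint_left]
  intro x hx hx'
  have ha := stack_lt g n hne hst m m' h1 h2
  have hb := le_fmax hx
  have hc := fmin_le hx'
  omega

lemma omega1_card (Z : Finset ℕ) (h : OmegaLarge 1 Z) : fmin Z < Z.card := by
  obtain ⟨hne, g, h0, hst, hmin, hdec⟩ := h
  have h0' : ∀ m < fmin Z, (g m).Nonempty := fun m hm => h0 m hm
  have hdisj : ∀ m ∈ Finset.range (fmin Z), ∀ m' ∈ Finset.range (fmin Z),
      m ≠ m' → Disjoint (g m) (g m') := by
    intro m hm m' hm' hmne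
    simp only [Finset.mem_range] at hm hm'
    rcases lt_or_gt_of_ne hmne with h | h
    · exact stack_disj g (fmin Z) h0' hst m m' h hm'
    · exact (stack_disj g (fmin Z) h0' hst m' m h hm).symm
  have hcard : fmin Z ≤ ((Finset.range (fmin Z)).biUnion g).card := by
    rw [Finset.card_biUnion hdisj]
    calc fmin Z = ∑ _m ∈ Finset.range (fmin Z), 1 := by simp
    _ ≤ ∑ m ∈ Finset.range (fmin Z), (g m).card :=
        Finset.sum_le_sum (fun m hm => Finset.card_pos.mpr (h0' m (Finset.mem_range.mp hm)))
  have hnotmem : fmin Z ∉ (Finset.range (fmin Z)).biUnion g := by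
    simp only [Finset.mem_biUnion, Finset.mem_range, not_exists]
    rintro m ⟨hm, hmem⟩
    have h1 := hmin m hm
    have h2 := fmin_le hmem
    omega
  have : Z.card = ((Finset.range (fmin Z)).biUnion g).card + 1 := by
    conv_lhs => rw [hdec]
    rw [Finset.card_insert_of_notMem hnotmem]
  omega

lemma omega2_card (Y : Finset ℕ) (h : OmegaLarge 2 Y) (hb : 1 ≤ fmin Y) :
    2 ^ (fmin Y) < Y.card := by
  obtain ⟨hne, g, h1, hst, hmin, hdec⟩ := h
  have h1' : ∀ m < fmin Y, (g m).Nonempty := fun m hm => (h1 m hm).1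
  have hgrow : ∀ i < fmin Y, 2 ^ i * (fmin Y + 1) ≤ fmin (g i) := by
    intro i
    induction i with
    | zero => intro hi; have := hmin 0 hi; simpa using this
    | succ k ih =>
      intro hi
      have hk := ih (by omega)
      have hc := omega1_card (g k) (h1 k (by omega))
      have hf := card_add_fmin_le (g k) (h1' k (by omega))
      have hs := hst k hi
      have hpow : 2 ^ (k+1) * (fmin Y + 1) = 2 * (2 ^ k * (fmin Y + 1)) := by ring
      omega
  have hlast := hgrow (fmin Y - 1) (by omega)
  have hsub : g (fmin Y - 1) ⊆ Y := by
    intro x hx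
    rw [hdec]
    exact Finset.mem_insert_of_mem (Finset.mem_biUnion.mpr
      ⟨fmin Y - 1, Finset.mem_range.mpr (by omega), hx⟩)
  have hcard := Finset.card_le_card hsub
  have hc := omega1_card (g (fmin Y - 1)) (h1 (fmin Y - 1) (by omega))
  have hpow : 2 ^ (fmin Y) = 2 * 2 ^ (fmin Y - 1) := by
    rw [← pow_succ']
    congr 1
    omega
  have h2 : 2 * 2 ^ (fmin Y - 1) ≤ 2 ^ (fmin Y - 1) * (fmin Y + 1) := by
    rw [mul_comm]
    exact Nat.mul_le_mul_left _ (by omega)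
  omega

lemma expIter_mono (n : ℕ) {x y : ℕ} (h : x ≤ y) : expIter n x ≤ expIter n y := by
  induction n with
  | zero => exact h
  | succ k ih => exact Nat.pow_le_pow_right (by norm_num) ih

/-- If `X` is ω^3-large then `|X| > exp^{min X}(min X)`. -/
theorem stmt1 (X : Finset ℕ) (hX : OmegaLarge 3 X) :
    expIter (fmin X) (fmin X) < X.card := by
  obtain ⟨hne, g, h2, hst, hmin, hdec⟩ := hX
  by_cases ha : fmin X = 0
  · rw [ha]
    simpa [expIter] using Finset.card_pos.mpr hne
  have ha1 : 1 ≤ fmin X := by omega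
  have h2' : ∀ m < fmin X, (g m).Nonempty := fun m hm => (h2 m hm).1
  have hgrow : ∀ i < fmin X, expIter i (fmin X + 1) ≤ fmin (g i) := by
    intro i
    induction i with
    | zero => intro hi; have := hmin 0 hi; simp only [expIter]; omega
    | succ k ih =>
      intro hi
      have hk := ih (by omega)
      have hmk : 1 ≤ fmin (g k) := by have := hmin k (by omega); omega
      have hc := omega2_card (g k) (h2 k (by omega)) hmk
      have hf := card_add_fmin_le (g k) (h2' k (by omega))
      have hs := hst k hi
      have hpow : expIter (k+1) (fmin X + 1) = 2 ^ (expIter k (fmin X + 1)) := rfl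
      have hmono : 2 ^ (expIter k (fmin X + 1)) ≤ 2 ^ (fmin (g k)) :=
        Nat.pow_le_pow_right (by norm_num) hk
      omega
  have hlast := hgrow (fmin X - 1) (by omega)
  have hmlast : 1 ≤ fmin (g (fmin X - 1)) := by
    have := hmin (fmin X - 1) (by omega); omega
  have hc := omega2_card (g (fmin X - 1)) (h2 (fmin X - 1) (by omega)) hmlast
  have hsub : g (fmin X - 1) ⊆ X := by
    intro x hx
    rw [hdec]
    exact Finset.mem_insert_of_mem (Finset.mem_biUnion.mpr
      ⟨fmin X - 1, Finset.mem_range.mpr (by omega), hx⟩)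
  have hcard := Finset.card_le_card hsub
  have hmono1 : expIter (fmin X) (fmin X) ≤ expIter (fmin X) (fmin X + 1) :=
    expIter_mono _ (by omega)
  have hpow : expIter (fmin X) (fmin X + 1) = 2 ^ (expIter (fmin X - 1) (fmin X + 1)) := by
    obtain ⟨m, hm⟩ : ∃ m, fmin X = m + 1 := ⟨fmin X - 1, by omega⟩
    rw [hm]
    simp [expIter]
  have hmono2 : 2 ^ (expIter (fmin X - 1) (fmin X + 1)) ≤ 2 ^ (fmin (g (fmin X - 1))) :=
    Nat.pow_le_pow_right (by norm_num) hlast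
  omega
end

section
/- Define ḡ(x, k, 0) = x + k + 1 and ḡ(x, k, i+1) = g(ḡ(x, k, i), 1/k), where g(m, δ) = (m−1)·e + m(m−1)/2 with e the least integer such that 2^{−e} < δ. Then for all i ≥ 0 and all x ≥ k > 0, ḡ(x, k, i) ≤ (x + k + i + 1)^{2^i}. -/
open Finset

lemma eOf_one_div_le (k : ℕ) (hk : 0 < k) : eOf (1/(k:ℚ)) ≤ k := by
  apply Nat.sInf_le
  have hk' : (0:ℚ) < k := by exact_mod_cast hk
  have h2 : (0:ℚ) < 2 ^ (k:ℕ) := by positivity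
  have hlt : (k:ℚ) < 2 ^ (k:ℕ) := by exact_mod_cast (Nat.lt_two_pow_self (n := k))
  simp only [Set.mem_setOf_eq]
  rw [zpow_neg, zpow_natCast, ← one_div]
  exact one_div_lt_one_div_of_lt hk' hlt

/-- The arithmetic bound `ḡ(x,k,i) ≤ (x+k+i+1)^{2^i}` for `x ≥ k > 0`. -/
theorem stmt9 (i x k : ℕ) (hk : 0 < k) (hxk : k ≤ x) :
    gbar x k i ≤ (x + k + i + 1) ^ (2^i) := by
  induction i with
  | zero => simp [gbar]
  | succ i ih =>
    set m := gbar x k i with hm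
    set A := x + k + i + 1 with hA
    have hA2 : 2 ≤ A := by omega
    have hAle : A ≤ A ^ (2^i) := Nat.le_self_pow (Nat.pos_of_ne_zero (by positivity)).ne' A
    have he : eOf (1/(k:ℚ)) ≤ k := eOf_one_div_le k hk
    have key : 2 * gKG m (1/(k:ℚ)) ≤ 2 * (A ^ (2^i) * A ^ (2^i)) := by
      unfold gKG
      have h1 : 2 * ((m-1) * eOf (1/(k:ℚ))) ≤ A ^ (2^i) * A ^ (2^i) := by
        calc 2 * ((m-1) * eOf (1/(k:ℚ))) ≤ m * (2 * k) := by
              have : m - 1 ≤ m := Nat.sub_le _ _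
              calc 2 * ((m-1) * eOf (1/(k:ℚ))) ≤ 2 * (m * k) :=
                    Nat.mul_le_mul_left _ (Nat.mul_le_mul this he)
                _ = m * (2 * k) := by ring
          _ ≤ A ^ (2^i) * A ^ (2^i) := by
              apply Nat.mul_le_mul ih
              calc 2 * k ≤ A := by omega
                _ ≤ A ^ (2^i) := hAle
      have h2 : 2 * (m * (m-1) / 2) ≤ A ^ (2^i) * A ^ (2^i) := by
        calc 2 * (m * (m-1) / 2) ≤ m * (m-1) := Nat.mul_div_le _ 2 |>.trans_eq rfl
          _ ≤ m * m := Nat.mul_le_mul_left _ (Nat.sub_le _ _)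
          _ ≤ A ^ (2^i) * A ^ (2^i) := Nat.mul_le_mul ih ih
      omega
    have hg : gKG m (1/(k:ℚ)) ≤ A ^ (2^i) * A ^ (2^i) :=
      Nat.le_of_mul_le_mul_left key (by norm_num)
    have hpow : A ^ (2^i) * A ^ (2^i) = A ^ (2^(i+1)) := by
      rw [← pow_add]; ring_nf
    show gKG m (1/(k:ℚ)) ≤ (x + k + (i+1) + 1) ^ (2^(i+1))
    calc gKG m (1/(k:ℚ)) ≤ A ^ (2^(i+1)) := hpow ▸ hg
      _ ≤ (x + k + (i+1) + 1) ^ (2^(i+1)) := Nat.pow_le_pow_left (by omega) _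
end
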